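/- arXiv:2211.12184 — 2 statements merged into one kernel-verified Lean document; each statement's English description precedes it below -/
import Mathlib

section
/- Let E : ℝ^d → ℝ be continuous with E(x*) = 0 = inf E, and suppose there exist E_∞, R₀, η > 0 and ν > 0 such that (i) ‖x - x*‖_∞ ≤ (1/η) E(x)^ν for all x with ‖x - x*‖_∞ ≤ R₀, and (ii) E(x) > E_∞ for all x with ‖x - x*‖_∞ > R₀. Then for any probability measure μ on ℝ^d, any r ∈ (0, R₀] and any q > 0 with q + E_r ≤ E_∞ (where E_r := sup_{‖y-x*‖_∞ ≤ r} E(y)), the consensus point y_α(μ) := (∫ y e^{-αE(y)} dμ(y)) / (∫ e^{-αE(y)} dμ(y)) satisfies ‖y_α(μ) - x*‖₂ ≤ √d (q + E_r)^ν / η + (√d e^{-αq} / μ(B_r^∞(x*))) ∫ ‖y - x*‖₂ dμ(y), provided μ(B_r^∞(x*)) > 0 and the relevant integrals are finite. -/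
open MeasureTheory

/-- Auxiliary: if all coordinates of `z` are bounded by `c`, then the Euclidean
norm of `z` is bounded by `√d * c`. -/
lemma euclid_norm_le_of_coords {d : ℕ} (z : EuclideanSpace ℝ (Fin d)) (c : ℝ)
    (hc : 0 ≤ c) (h : ∀ i, |z i| ≤ c) : ‖z‖ ≤ Real.sqrt d * c := by
  rw [EuclideanSpace.norm_eq]
  have h1 : ∑ i, ‖z i‖ ^ 2 ≤ ∑ _i : Fin d, c ^ 2 := by
    refine Finset.sum_le_sum fun i _ => ?_
    have := h i
    rw [Real.norm_eq_abs]
    nlinarith [abs_nonneg (z i)]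
  have h2 : (∑ _i : Fin d, c ^ 2) = (d : ℝ) * c ^ 2 := by simp
  calc Real.sqrt (∑ i, ‖z i‖ ^ 2) ≤ Real.sqrt ((d : ℝ) * c ^ 2) := by
        apply Real.sqrt_le_sqrt; rw [← h2]; exact h1
    _ = Real.sqrt d * c := by
        rw [Real.sqrt_mul (Nat.cast_nonneg d), Real.sqrt_sq hc]

/-- Quantitative Laplace principle: under the inverse continuity property,
the consensus point `y_α(μ)` is quantitatively close to the global minimizer `x*`. -/
theorem quantitative_laplace {d : ℕ} (hd : 0 < d)
    (E : EuclideanSpace ℝ (Fin d) → ℝ) (xstar : EuclideanSpace ℝ (Fin d))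
    (α Einf R0 η ν Er r q : ℝ)
    (μ : Measure (EuclideanSpace ℝ (Fin d))) [IsProbabilityMeasure μ]
    (hα : 0 < α) (hE : Continuous E) (hExstar : E xstar = 0) (hEnn : ∀ x, 0 ≤ E x)
    (hEinf : 0 < Einf) (hR0 : 0 < R0) (hη : 0 < η) (hν : 0 < ν)
    (hicp1 : ∀ x, (∀ i, |x i - xstar i| ≤ R0) → ∀ i, |x i - xstar i| ≤ (1/η) * E x ^ ν)
    (hicp2 : ∀ x, (∃ i, R0 < |x i - xstar i|) → Einf < E x)
    (hr : 0 < r) (hrR0 : r ≤ R0) (hq : 0 < q)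
    (hEr : IsLUB (E '' {y | ∀ i, |y i - xstar i| ≤ r}) Er)
    (hqEr : q + Er ≤ Einf)
    (hmass : 0 < (μ {y | ∀ i, |y i - xstar i| ≤ r}).toReal)
    (hint1 : Integrable (fun y => Real.exp (-α * E y) • y) μ)
    (hint2 : Integrable (fun y => ‖y - xstar‖) μ) :
    ‖(∫ y, Real.exp (-α * E y) ∂μ)⁻¹ • (∫ y, Real.exp (-α * E y) • y ∂μ) - xstar‖
      ≤ Real.sqrt d * (q + Er) ^ ν / η
        + Real.sqrt d * Real.exp (-α * q) / (μ {y | ∀ i, |y i - xstar i| ≤ r}).toReal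
          * ∫ y, ‖y - xstar‖ ∂μ := by
  set f : EuclideanSpace ℝ (Fin d) → ℝ := fun y => Real.exp (-α * E y) with hfdef
  set B : Set (EuclideanSpace ℝ (Fin d)) := {y | ∀ i, |y i - xstar i| ≤ r} with hBdef
  set m : ℝ := (μ B).toReal with hmdef
  set Z : ℝ := ∫ y, f y ∂μ with hZdef
  set Inorm : ℝ := ∫ y, ‖y - xstar‖ ∂μ with hInormdef
  -- basic facts about f
  have hf_cont : Continuous f := Real.continuous_exp.comp (continuous_const.mul hE)
  have hf_pos : ∀ y, 0 < f y := fun y => Real.exp_pos _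
  have hf_le_one : ∀ y, f y ≤ 1 := by
    intro y
    apply Real.exp_le_one_iff.2
    have := hEnn y
    nlinarith
  have hf_int : Integrable f μ := by
    refine (integrable_const (1 : ℝ)).mono' hf_cont.aestronglyMeasurable ?_
    exact Filter.Eventually.of_forall fun y => by
      rw [Real.norm_eq_abs, abs_of_pos (hf_pos y)]; exact hf_le_one y
  -- the integrand for the norm estimate
  set g : EuclideanSpace ℝ (Fin d) → ℝ := fun y => f y * ‖y - xstar‖ with hgdef
  have hg_cont : Continuous g := hf_cont.mul ((continuous_id.sub continuous_const).norm)
  have hg_nonneg : ∀ y, 0 ≤ g y := fun y => mul_nonneg (hf_pos y).le (norm_nonneg _)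
  have hg_int : Integrable g μ := by
    refine hint2.mono' hg_cont.aestronglyMeasurable ?_
    exact Filter.Eventually.of_forall fun y => by
      rw [Real.norm_eq_abs, abs_of_nonneg (hg_nonneg y)]
      exact mul_le_of_le_one_left (norm_nonneg _) (hf_le_one y)
  -- measurability of B and bound on Er
  have hproj : ∀ i, Continuous fun y : EuclideanSpace ℝ (Fin d) => y i := fun i =>
    (EuclideanSpace.proj i (𝕜 := ℝ)).continuous
  have hB_meas : MeasurableSet B := by
    have : B = ⋂ i, {y : EuclideanSpace ℝ (Fin d) | |y i - xstar i| ≤ r} := by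
      ext y; simp [hBdef, Set.mem_iInter]
    rw [this]
    refine MeasurableSet.iInter fun i => ?_
    exact measurableSet_le (((hproj i).sub continuous_const).abs.measurable) measurable_const
  have hxstarB : xstar ∈ B := by intro i; simp [hr.le]
  have hEr_nonneg : 0 ≤ Er := hEr.1 ⟨xstar, hxstarB, hExstar⟩
  have hE_le_Er : ∀ y ∈ B, E y ≤ Er := fun y hy => hEr.1 ⟨y, hy, rfl⟩
  -- lower bound on Z
  have hZ_lb : Real.exp (-α * Er) * m ≤ Z := by
    have h1 : Real.exp (-α * Er) * m ≤ ∫ y in B, f y ∂μ := by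
      refine setIntegral_ge_of_const_le_real hB_meas (measure_ne_top μ B) ?_ hf_int.integrableOn
      intro y hy
      apply Real.exp_le_exp.2
      have := hE_le_Er y hy
      nlinarith
    have h2 : ∫ y in B, f y ∂μ ≤ Z := by
      exact setIntegral_le_integral hf_int (Filter.Eventually.of_forall fun y => (hf_pos y).le)
    linarith
  have hm_pos : 0 < m := hmass
  have hZ_pos : 0 < Z := lt_of_lt_of_le (mul_pos (Real.exp_pos _) hm_pos) hZ_lb
  -- rewrite the difference
  have key : (∫ y, f y • y ∂μ) - Z • xstar = ∫ y, f y • (y - xstar) ∂μ := by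
    have h1 : ∫ y, f y • (y - xstar) ∂μ = ∫ y, (f y • y - f y • xstar) ∂μ := by
      congr 1; funext y; rw [smul_sub]
    rw [h1, integral_sub hint1 (hf_int.smul_const xstar), integral_smul_const]
  have hdiff : (∫ y, f y ∂μ)⁻¹ • (∫ y, f y • y ∂μ) - xstar
      = Z⁻¹ • (∫ y, f y • (y - xstar) ∂μ) := by
    rw [← key, smul_sub, smul_smul, inv_mul_cancel₀ hZ_pos.ne', one_smul, ← hZdef]
  rw [hdiff, norm_smul, Real.norm_eq_abs, abs_of_pos (inv_pos.2 hZ_pos)]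
  -- bound the norm of the integral by the integral of g
  have hnorm : ‖∫ y, f y • (y - xstar) ∂μ‖ ≤ ∫ y, g y ∂μ := by
    calc ‖∫ y, f y • (y - xstar) ∂μ‖ ≤ ∫ y, ‖f y • (y - xstar)‖ ∂μ :=
          norm_integral_le_integral_norm _
      _ = ∫ y, g y ∂μ := by
          congr 1; funext y
          rw [norm_smul, Real.norm_eq_abs, abs_of_pos (hf_pos y)]
  -- split the integral
  set A : Set (EuclideanSpace ℝ (Fin d)) := E ⁻¹' Set.Iic (q + Er) with hAdef
  have hA_meas : MeasurableSet A := hE.measurable measurableSet_Iic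
  have hsplit : ∫ y, g y ∂μ = (∫ y in A, g y ∂μ) + ∫ y in Aᶜ, g y ∂μ :=
    (integral_add_compl hA_meas hg_int).symm
  set C : ℝ := Real.sqrt d * (q + Er) ^ ν / η with hCdef
  have hqEr_nonneg : 0 ≤ q + Er := by linarith
  have hC_nonneg : 0 ≤ C := by
    apply div_nonneg _ hη.le
    exact mul_nonneg (Real.sqrt_nonneg _) (Real.rpow_nonneg hqEr_nonneg _)
  -- bound on A
  have hptwA : ∀ y ∈ A, ‖y - xstar‖ ≤ C := by
    intro y hy
    have hyE : E y ≤ q + Er := hy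
    have hcoord : ∀ i, |y i - xstar i| ≤ R0 := by
      by_contra hcon
      push_neg at hcon
      obtain ⟨i, hi⟩ := hcon
      have := hicp2 y ⟨i, hi⟩
      linarith
    have hcoord2 : ∀ i, |(y - xstar) i| ≤ (1/η) * (q + Er) ^ ν := by
      intro i
      have h1 := hicp1 y hcoord i
      have h2 : E y ^ ν ≤ (q + Er) ^ ν :=
        Real.rpow_le_rpow (hEnn y) hyE hν.le
      have h3 : (1/η) * E y ^ ν ≤ (1/η) * (q + Er) ^ ν := by
        apply mul_le_mul_of_nonneg_left h2
        positivity
      have h4 : (y - xstar) i = y i - xstar i := rfl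
      rw [h4]
      linarith
    have := euclid_norm_le_of_coords (y - xstar) ((1/η) * (q + Er) ^ ν)
      (by positivity) hcoord2
    calc ‖y - xstar‖ ≤ Real.sqrt d * ((1/η) * (q + Er) ^ ν) := this
      _ = C := by rw [hCdef]; ring
  have hboundA : ∫ y in A, g y ∂μ ≤ Z * C := by
    have h1 : ∫ y in A, g y ∂μ ≤ ∫ y in A, f y * C ∂μ := by
      refine setIntegral_mono_on hg_int.integrableOn
        ((hf_int.mul_const C).integrableOn) hA_meas ?_
      intro y hy
      exact mul_le_mul_of_nonneg_left (hptwA y hy) (hf_pos y).le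
    have h2 : ∫ y in A, f y * C ∂μ = (∫ y in A, f y ∂μ) * C := integral_mul_const _ _
    have h3 : ∫ y in A, f y ∂μ ≤ Z :=
      setIntegral_le_integral hf_int (Filter.Eventually.of_forall fun y => (hf_pos y).le)
    calc ∫ y in A, g y ∂μ ≤ (∫ y in A, f y ∂μ) * C := by rw [← h2]; exact h1
      _ ≤ Z * C := mul_le_mul_of_nonneg_right h3 hC_nonneg
  -- bound on Aᶜ
  have hInorm_nonneg : 0 ≤ Inorm :=
    integral_nonneg fun y => norm_nonneg _
  have hboundAc : ∫ y in Aᶜ, g y ∂μ ≤ Real.exp (-α * (q + Er)) * Inorm := by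
    have h1 : ∫ y in Aᶜ, g y ∂μ ≤ ∫ y in Aᶜ, Real.exp (-α * (q + Er)) * ‖y - xstar‖ ∂μ := by
      refine setIntegral_mono_on hg_int.integrableOn
        ((hint2.const_mul _).integrableOn) hA_meas.compl ?_
      intro y hy
      have hyE : q + Er < E y := by
        simp only [hAdef, Set.mem_compl_iff, Set.mem_preimage, Set.mem_Iic, not_le] at hy
        exact hy
      have : f y ≤ Real.exp (-α * (q + Er)) := by
        apply Real.exp_le_exp.2; nlinarith
      exact mul_le_mul_of_nonneg_right this (norm_nonneg _)
    have h2 : ∫ y in Aᶜ, Real.exp (-α * (q + Er)) * ‖y - xstar‖ ∂μ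
        = Real.exp (-α * (q + Er)) * ∫ y in Aᶜ, ‖y - xstar‖ ∂μ := integral_const_mul _ _
    have h3 : ∫ y in Aᶜ, ‖y - xstar‖ ∂μ ≤ Inorm :=
      setIntegral_le_integral hint2 (Filter.Eventually.of_forall fun y => norm_nonneg _)
    calc ∫ y in Aᶜ, g y ∂μ ≤ Real.exp (-α * (q + Er)) * ∫ y in Aᶜ, ‖y - xstar‖ ∂μ := by
          rw [← h2]; exact h1
      _ ≤ Real.exp (-α * (q + Er)) * Inorm :=
          mul_le_mul_of_nonneg_left h3 (Real.exp_pos _).le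
  -- combine
  have hsqrtd : (1 : ℝ) ≤ Real.sqrt d := by
    rw [show (1 : ℝ) = Real.sqrt 1 from (Real.sqrt_one).symm]
    apply Real.sqrt_le_sqrt
    exact_mod_cast hd
  have hfactor : Z⁻¹ * Real.exp (-α * (q + Er)) ≤ Real.sqrt d * Real.exp (-α * q) / m := by
    have h1 : Z⁻¹ ≤ (Real.exp (-α * Er) * m)⁻¹ := by
      apply inv_anti₀ (mul_pos (Real.exp_pos _) hm_pos) hZ_lb
    have h2 : Z⁻¹ * Real.exp (-α * (q + Er))
        ≤ (Real.exp (-α * Er) * m)⁻¹ * Real.exp (-α * (q + Er)) :=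
      mul_le_mul_of_nonneg_right h1 (Real.exp_pos _).le
    have h3 : (Real.exp (-α * Er) * m)⁻¹ * Real.exp (-α * (q + Er))
        = Real.exp (-α * q) / m := by
      rw [mul_inv, mul_comm, ← mul_assoc, ← Real.exp_neg]
      rw [← Real.exp_add]
      rw [show -α * (q + Er) + -(-α * Er) = -α * q by ring]
      rw [div_eq_mul_inv]
    have h4 : Real.exp (-α * q) / m ≤ Real.sqrt d * Real.exp (-α * q) / m := by
      gcongr
      nlinarith [Real.exp_pos (-α * q)]
    linarith
  calc Z⁻¹ * ‖∫ y, f y • (y - xstar) ∂μ‖ ≤ Z⁻¹ * ∫ y, g y ∂μ :=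
        mul_le_mul_of_nonneg_left hnorm (inv_pos.2 hZ_pos).le
    _ ≤ Z⁻¹ * (Z * C + Real.exp (-α * (q + Er)) * Inorm) := by
        apply mul_le_mul_of_nonneg_left _ (inv_pos.2 hZ_pos).le
        rw [hsplit]
        exact add_le_add hboundA hboundAc
    _ = C + (Z⁻¹ * Real.exp (-α * (q + Er))) * Inorm := by
        rw [mul_add, ← mul_assoc, inv_mul_cancel₀ hZ_pos.ne', one_mul, ← mul_assoc]
    _ ≤ C + (Real.sqrt d * Real.exp (-α * q) / m) * Inorm := by
        exact add_le_add le_rfl (mul_le_mul_of_nonneg_right hfactor hInorm_nonneg)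
    _ = Real.sqrt d * (q + Er) ^ ν / η
        + Real.sqrt d * Real.exp (-α * q) / m * Inorm := by rw [hCdef]
end

section
/- Under the inverse continuity property (‖x - x*‖_∞ ≤ (1/η) E(x)^ν on B_{R₀}^∞(x*) and E > E_∞ outside it, with E(x*) = 0), if r ∈ (0, R₀], q > 0, q + E_r ≤ E_∞, and r̃ := (q + E_r)^ν / η, then r̃ ≥ r and inf_{y ∉ B_{r̃}^∞(x*)} E(y) - E_r ≥ q. -/
/-- Intermediate step of the quantitative Laplace principle: with
`r̃ := (q + E_r)^ν / η` one has `r̃ ≥ r` and `E(y) ≥ q + E_r` outside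
the ℓ∞-ball of radius `r̃` (here `Fin d → ℝ` carries the sup norm). -/
theorem laplace_radius_step {d : ℕ} (hd : 0 < d) (E : (Fin d → ℝ) → ℝ)
    (xstar : Fin d → ℝ) (Einf R0 η ν Er r q : ℝ)
    (hE : Continuous E) (hExstar : E xstar = 0) (hEnn : ∀ x, 0 ≤ E x)
    (hη : 0 < η) (hν : 0 < ν) (hR0 : 0 < R0) (hEinf : 0 < Einf)
    (hicp1 : ∀ x ∈ Metric.closedBall xstar R0, ‖x - xstar‖ ≤ (1/η) * E x ^ ν)
    (hicp2 : ∀ x ∉ Metric.closedBall xstar R0, Einf < E x)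
    (hr : 0 < r) (hrR0 : r ≤ R0) (hq : 0 < q)
    (hEr : IsLUB (E '' Metric.closedBall xstar r) Er)
    (hqEr : q + Er ≤ Einf) :
    r ≤ (q + Er) ^ ν / η ∧
      ∀ y ∉ Metric.closedBall xstar ((q + Er) ^ ν / η), q + Er ≤ E y := by
  have hEr0 : 0 ≤ Er := by
    have : E xstar ∈ E '' Metric.closedBall xstar r :=
      ⟨xstar, Metric.mem_closedBall_self hr.le, rfl⟩
    have := hEr.1 this
    linarith [hExstar ▸ this]
  have hqEr0 : 0 < q + Er := by linarith
  have hnt : Nontrivial (Fin d → ℝ) := by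
    refine ⟨0, Function.const _ 1, fun h => ?_⟩
    have := congrFun h ⟨0, hd⟩
    simp [Function.const] at this
  -- a point on the sphere of radius r
  obtain ⟨x, hx⟩ := NormedSpace.sphere_nonempty (x := xstar) (r := r) |>.2 hr.le
  have hxball : x ∈ Metric.closedBall xstar r := Metric.sphere_subset_closedBall hx
  have hxR0 : x ∈ Metric.closedBall xstar R0 :=
    Metric.closedBall_subset_closedBall hrR0 hxball
  have hEx : E x ≤ Er := hEr.1 ⟨x, hxball, rfl⟩
  have hxnorm : ‖x - xstar‖ = r := by
    rw [← dist_eq_norm]; exact Metric.mem_sphere.1 hx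
  constructor
  · have h1 : r ≤ (1/η) * E x ^ ν := hxnorm ▸ hicp1 x hxR0
    have h2 : E x ^ ν ≤ (q + Er) ^ ν :=
      Real.rpow_le_rpow (hEnn x) (by linarith) hν.le
    calc r ≤ (1/η) * E x ^ ν := h1
      _ ≤ (1/η) * (q + Er) ^ ν := by
          apply mul_le_mul_of_nonneg_left h2 (by positivity)
      _ = (q + Er) ^ ν / η := by ring
  · intro y hy
    by_cases hyR0 : y ∈ Metric.closedBall xstar R0
    · by_contra hlt
      push_neg at hlt
      have h1 : (q + Er) ^ ν / η < ‖y - xstar‖ := by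
        rw [← dist_eq_norm]
        exact lt_of_not_ge (fun h => hy (Metric.mem_closedBall.2 h))
      have h2 : ‖y - xstar‖ ≤ (1/η) * E y ^ ν := hicp1 y hyR0
      have h3 : E y ^ ν < (q + Er) ^ ν :=
        Real.rpow_lt_rpow (hEnn y) hlt hν
      have h4 : (1/η) * E y ^ ν < (1/η) * (q + Er) ^ ν :=
        mul_lt_mul_of_pos_left h3 (by positivity)
      have heq : (1/η) * (q + Er) ^ ν = (q + Er) ^ ν / η := by ring
      linarith
    · have := hicp2 y hyR0
      linarith
end
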